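/- For every integer k ≥ 0, setting μ = 18 + 2k, the following inequality of rational numbers holds: (13/15 − 3/2)² + (16/15 − 3/2)² + (19/15 − 3/2)² + (4/3 − 3/2)² + (22/15 − 3/2)² + (23/15 − 3/2)² + (5/3 − 3/2)² + (26/15 − 3/2)² + (29/15 − 3/2)² + (32/15 − 3/2)² + ∑_{l=1}^{2k+8} ((l + 2k + 9)/(2k+9) − 3/2)² ≤ (μ/12)·(32/15 − 13/15). -/
import Mathlib

lemma aux_sum (N : ℚ) (hN : N ≠ 0) : ∀ m : ℕ,
    ∑ l ∈ Finset.Icc 1 m, (((l : ℚ) + N) / N - 3/2) ^ 2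
      = ((m : ℚ) * (m + 1) * (2 * m + 1) / 6 - (m : ℚ) * (m + 1) / 2 * N
          + (m : ℚ) * N ^ 2 / 4) / N ^ 2
  | 0 => by simp
  | (m + 1) => by
    rw [Finset.sum_Icc_succ_top (Nat.one_le_iff_ne_zero.mpr (Nat.succ_ne_zero m)),
      aux_sum N hN m]
    push_cast
    field_simp
    ring

theorem stmt_11 (k : ℕ) :
    ((13/15 : ℚ) - 3/2) ^ 2 +
      ((16/15 : ℚ) - 3/2) ^ 2 +
      ((19/15 : ℚ) - 3/2) ^ 2 +
      ((4/3 : ℚ) - 3/2) ^ 2 +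
      ((22/15 : ℚ) - 3/2) ^ 2 +
      ((23/15 : ℚ) - 3/2) ^ 2 +
      ((5/3 : ℚ) - 3/2) ^ 2 +
      ((26/15 : ℚ) - 3/2) ^ 2 +
      ((29/15 : ℚ) - 3/2) ^ 2 +
      ((32/15 : ℚ) - 3/2) ^ 2 +
      ∑ l ∈ Finset.Icc 1 (2 * k + 8), (((l : ℚ) + 2 * (k : ℚ) + 9) / (2 * (k : ℚ) + 9) - 3/2) ^ 2
    ≤ ((18 + 2 * (k : ℚ)) / 12) * (32/15 - 13/15) := by
  have hk : (0 : ℚ) ≤ (k : ℚ) := Nat.cast_nonneg k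
  have hN : (2 * (k : ℚ) + 9) ≠ 0 := by positivity
  have h := aux_sum (2 * (k : ℚ) + 9) hN (2 * k + 8)
  have hsum : ∑ l ∈ Finset.Icc 1 (2 * k + 8),
      (((l : ℚ) + 2 * (k : ℚ) + 9) / (2 * (k : ℚ) + 9) - 3/2) ^ 2
      = ∑ l ∈ Finset.Icc 1 (2 * k + 8),
      (((l : ℚ) + (2 * (k : ℚ) + 9)) / (2 * (k : ℚ) + 9) - 3/2) ^ 2 := by
    apply Finset.sum_congr rfl
    intro l _
    ring_nf
  rw [hsum, h]
  push_cast
  have h2 : (0:ℚ) < (2 * (k : ℚ) + 9) ^ 2 := by positivity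
  rw [← sub_nonneg]
  field_simp
  ring_nf
  positivity
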